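/- Let H be a complex Hilbert space of dimension greater than 1 (possibly infinite), and let S be a set of bounded linear operators on H that pairwise commute and is closed under taking adjoints (A ∈ S implies A* ∈ S). Then there exists a closed subspace W of H with W ≠ {0} and W ≠ H that is invariant under every operator in S. -/

import Mathlib

open Polynomial

lemma commute_cfc_of_commute {H : Type*} [NormedAddCommGroup H] [InnerProductSpace ℂ H]
    [CompleteSpace H] (T B : H →L[ℂ] H) (hT : IsSelfAdjoint T) (hB : Commute B T)
    (f : ℝ → ℝ) : Commute B (cfc f T) := by
  refine cfc_cases (fun x => Commute B x) T f (Commute.zero_right B) fun hf hp => ?_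
  -- reduce to cfcHom
  have hCclosed : IsClosed {x : H →L[ℂ] H | Commute B x} := by
    have : {x : H →L[ℂ] H | Commute B x} = {x | B * x = x * B} := rfl
    rw [this]
    exact isClosed_eq (continuous_const.mul continuous_id) (continuous_id.mul continuous_const)
  have hpoly : ∀ q : ℝ[X], Commute B (aeval T q) := by
    intro q
    have hmem : aeval T q ∈ Algebra.adjoin ℝ {T} := Polynomial.aeval_mem_adjoin_singleton ℝ T
    have hle : Algebra.adjoin ℝ {T} ≤ Subalgebra.centralizer ℝ {B} := by
      apply Algebra.adjoin_le
      intro x hx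
      rw [Set.mem_singleton_iff] at hx
      subst hx
      simp only [SetLike.mem_coe, Subalgebra.mem_centralizer_iff]
      intro y hy
      rw [Set.mem_singleton_iff] at hy
      subst hy
      exact hB
    have := hle hmem
    rw [Subalgebra.mem_centralizer_iff] at this
    exact this B rfl
  set g : C(spectrum ℝ T, ℝ) := ⟨_, hf.restrict⟩ with hg
  have hgtop : g ∈ closure ((polynomialFunctions (spectrum ℝ T)) : Set C(spectrum ℝ T, ℝ)) := by
    have := polynomialFunctions.topologicalClosure (spectrum ℝ T)
    have hmem : g ∈ (polynomialFunctions (spectrum ℝ T)).topologicalClosure := by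
      rw [this]; trivial
    exact hmem
  have hmaps : Set.MapsTo (cfcHom hp (R := ℝ)) ((polynomialFunctions (spectrum ℝ T)) : Set C(spectrum ℝ T, ℝ)) {x | Commute B x} := by
    rintro p ⟨q, -, rfl⟩
    have key : cfcHom hp (toContinuousMapOnAlgHom (spectrum ℝ T) q) = aeval T q := by
      have h1 : cfc q.eval T = aeval T q := cfc_polynomial q T
      have hc : Continuous (q.eval : ℝ → ℝ) := q.continuous
      have h2 : cfc q.eval T = cfcHom hp ⟨_, hc.continuousOn.restrict⟩ :=
        cfc_apply q.eval T hp hc.continuousOn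
      rw [← h1, h2]
      congr 1
    show Commute B ((cfcHom hp) ((toContinuousMapOnAlgHom (spectrum ℝ T)) q))
    rw [key]
    exact hpoly q
  have := map_mem_closure (cfcHom_continuous hp (R := ℝ)) hgtop hmaps
  rwa [hCclosed.closure_eq] at this



lemma exists_invariant_of_selfAdjoint_nonscalar {H : Type*} [NormedAddCommGroup H]
    [InnerProductSpace ℂ H] [CompleteSpace H] [Nontrivial H]
    (T : H →L[ℂ] H) (hT : IsSelfAdjoint T) (hns : ∀ c : ℂ, T ≠ c • 1) :
    ∃ W : Submodule ℂ H, IsClosed (W : Set H) ∧ W ≠ ⊥ ∧ W ≠ ⊤ ∧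
      ∀ B : H →L[ℂ] H, Commute B T → ∀ w ∈ W, B w ∈ W := by
  have hnt : Nontrivial (H →L[ℂ] H) := by
    obtain ⟨x, hx⟩ := exists_ne (0 : H)
    refine ⟨1, 0, fun h => hx ?_⟩
    simpa using DFunLike.congr_fun h x
  -- two spectrum points
  have h2pts : ∃ a ∈ spectrum ℝ T, ∃ b ∈ spectrum ℝ T, a ≠ b := by
    obtain ⟨a, ha⟩ := hT.spectrum_nonempty
    by_contra hcon
    push_neg at hcon
    have hsub : spectrum ℝ T ⊆ {a} := fun x hx => hcon x hx a ha
    have h1 : T = cfc (id : ℝ → ℝ) T := (cfc_id ℝ T).symm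
    have h2 : cfc (id : ℝ → ℝ) T = cfc (fun _ : ℝ => a) T :=
      cfc_congr fun x hx => by simpa using hsub hx
    refine hns (a : ℂ) ?_
    rw [h1, h2, cfc_const a T, Algebra.algebraMap_eq_smul_one]
    norm_num [← Complex.coe_smul]
  obtain ⟨a, ha, b, hb, hab⟩ := h2pts
  set c := min a b with hc
  set d := max a b with hd
  have hcd : c < d := by
    rcases lt_or_gt_of_ne hab with h | h
    · simpa [hc, hd, min_eq_left h.le, max_eq_right h.le] using h
    · simpa [hc, hd, min_eq_right h.le, max_eq_left h.le] using h
  have hcs : c ∈ spectrum ℝ T := by rcases min_choice a b with h | h <;> rw [hc, h] <;> assumption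
  have hds : d ∈ spectrum ℝ T := by rcases max_choice a b with h | h <;> rw [hd, h] <;> assumption
  set m := (c + d) / 2 with hm
  have hcm : c < m := by rw [hm]; linarith
  have hmd : m < d := by rw [hm]; linarith
  set f : ℝ → ℝ := fun x => max (x - m) 0 with hf
  set g : ℝ → ℝ := fun x => max (m - x) 0 with hg
  have hfc : Continuous f := (continuous_id.sub continuous_const).max continuous_const
  have hgc : Continuous g := (continuous_const.sub continuous_id).max continuous_const
  have hfg : ∀ x, f x * g x = 0 := by
    intro x
    rcases le_total x m with h | h
    · rw [hf]; simp only [max_eq_right (by linarith : x - m ≤ 0)]; ring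
    · rw [hg]; simp only [max_eq_right (by linarith : m - x ≤ 0)]; ring
  have hprod : cfc f T * cfc g T = 0 := by
    rw [← cfc_mul f g T hfc.continuousOn hgc.continuousOn]
    have : (fun x => f x * g x) = (fun _ : ℝ => (0 : ℝ)) := funext hfg
    rw [this, cfc_const 0 T, map_zero]
  have hfne : cfc f T ≠ 0 := by
    intro h
    have := cfc_map_spectrum f T hT hfc.continuousOn
    rw [h] at this
    have hmem : f d ∈ spectrum ℝ (0 : H →L[ℂ] H) := this ▸ Set.mem_image_of_mem f hds
    rw [spectrum.zero_eq] at hmem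
    have : f d = 0 := hmem
    rw [hf] at this
    simp only [max_eq_left (by linarith : (0:ℝ) ≤ d - m)] at this
    linarith
  have hgne : cfc g T ≠ 0 := by
    intro h
    have := cfc_map_spectrum g T hT hgc.continuousOn
    rw [h] at this
    have hmem : g c ∈ spectrum ℝ (0 : H →L[ℂ] H) := this ▸ Set.mem_image_of_mem g hcs
    rw [spectrum.zero_eq] at hmem
    have : g c = 0 := hmem
    rw [hg] at this
    simp only [max_eq_left (by linarith : (0:ℝ) ≤ m - c)] at this
    linarith
  refine ⟨LinearMap.ker ((cfc f T : H →L[ℂ] H) : H →ₗ[ℂ] H), ?_, ?_, ?_, ?_⟩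
  · exact ContinuousLinearMap.isClosed_ker (cfc f T)
  · -- ≠ ⊥
    obtain ⟨x, hx⟩ : ∃ x, cfc g T x ≠ 0 := by
      by_contra hcon
      push_neg at hcon
      exact hgne (ContinuousLinearMap.ext fun x => by simpa using hcon x)
    rw [Submodule.ne_bot_iff]
    refine ⟨cfc g T x, ?_, hx⟩
    rw [LinearMap.mem_ker]
    show cfc f T (cfc g T x) = 0
    have : cfc f T (cfc g T x) = (cfc f T * cfc g T) x := rfl
    rw [this, hprod, ContinuousLinearMap.zero_apply]
  · -- ≠ ⊤
    intro h
    refine hfne (ContinuousLinearMap.ext fun x => ?_)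
    have : x ∈ LinearMap.ker ((cfc f T : H →L[ℂ] H) : H →ₗ[ℂ] H) := h ▸ Submodule.mem_top
    simpa using this
  · intro B hBT w hw
    have hcomm := commute_cfc_of_commute T B hT hBT f
    rw [LinearMap.mem_ker] at hw ⊢
    show cfc f T (B w) = 0
    have hw' : cfc f T w = 0 := hw
    calc cfc f T (B w) = (cfc f T * B) w := rfl
      _ = (B * cfc f T) w := by rw [hcomm.symm.eq]
      _ = B (cfc f T w) := rfl
      _ = 0 := by rw [hw', map_zero]


/-- A pairwise commuting, adjoint-closed set of bounded operators on a
complex Hilbert space of dimension `> 1` has a common nontrivial closed invariant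
subspace. -/
theorem exists_nontrivial_invariant_subspace_of_commuting_selfAdjoint_family
    {H : Type*} [NormedAddCommGroup H] [InnerProductSpace ℂ H] [CompleteSpace H]
    (hdim : 1 < Module.rank ℂ H)
    (S : Set (H →L[ℂ] H))
    (hcomm : ∀ A ∈ S, ∀ B ∈ S, Commute A B)
    (hadj : ∀ A ∈ S, ContinuousLinearMap.adjoint A ∈ S) :
    ∃ W : Submodule ℂ H, IsClosed (W : Set H) ∧ W ≠ ⊥ ∧ W ≠ ⊤ ∧
      ∀ A ∈ S, ∀ w ∈ W, A w ∈ W := by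
  have hntH : Nontrivial H :=
    (rank_pos_iff_nontrivial (R := ℂ) (M := H)).mp (lt_trans zero_lt_one hdim)
  by_cases hsc : ∀ A ∈ S, ∃ c : ℂ, A = c • 1
  · obtain ⟨x, hx⟩ := exists_ne (0 : H)
    refine ⟨ℂ ∙ x, ?_, ?_, ?_, ?_⟩
    · exact Submodule.closed_of_finiteDimensional (ℂ ∙ x)
    · intro h
      have hxW : x ∈ (ℂ ∙ x) := Submodule.mem_span_singleton_self x
      rw [h] at hxW
      exact hx (by simpa using hxW)
    · intro h
      have h1 : Module.rank ℂ H ≤ 1 := by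
        rw [← rank_top ℂ H, ← h]
        exact (rank_span_le _).trans (by simp)
      exact absurd (lt_of_lt_of_le hdim h1) (lt_irrefl _)
    · intro A hA w hw
      obtain ⟨c, rfl⟩ := hsc A hA
      have : (c • (1 : H →L[ℂ] H)) w = c • w := rfl
      rw [this]
      exact Submodule.smul_mem _ c hw
  · push_neg at hsc
    obtain ⟨A, hAS, hAns⟩ := hsc
    have hstarS : star A ∈ S := by
      rw [ContinuousLinearMap.star_eq_adjoint]; exact hadj A hAS
    set T₁ : H →L[ℂ] H := A + star A with hT₁def
    set T₂ : H →L[ℂ] H := Complex.I • (star A - A) with hT₂def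
    have hT₁sa : IsSelfAdjoint T₁ := by
      rw [IsSelfAdjoint, hT₁def, star_add, star_star, add_comm]
    have hT₂sa : IsSelfAdjoint T₂ := by
      rw [IsSelfAdjoint, hT₂def, star_smul, star_sub, star_star, Complex.star_def,
        Complex.conj_I, neg_smul, smul_sub, smul_sub, neg_sub]
    have hcomm₁ : ∀ B ∈ S, Commute B T₁ := fun B hB =>
      (hcomm B hB A hAS).add_right (hcomm B hB _ hstarS)
    have hcomm₂ : ∀ B ∈ S, Commute B T₂ := fun B hB =>
      ((hcomm B hB _ hstarS).sub_right (hcomm B hB A hAS)).smul_right Complex.I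
    have hkey : ∃ T : H →L[ℂ] H, IsSelfAdjoint T ∧ (∀ c : ℂ, T ≠ c • 1) ∧
        ∀ B ∈ S, Commute B T := by
      by_cases h1 : ∀ c : ℂ, T₁ ≠ c • 1
      · exact ⟨T₁, hT₁sa, h1, hcomm₁⟩
      by_cases h2 : ∀ c : ℂ, T₂ ≠ c • 1
      · exact ⟨T₂, hT₂sa, h2, hcomm₂⟩
      push_neg at h1 h2
      obtain ⟨a, ha⟩ := h1
      obtain ⟨b, hb⟩ := h2
      exfalso
      have hsub : star A - A = (-(Complex.I * b)) • 1 := by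
        have h := congrArg (fun X : H →L[ℂ] H => (-(Complex.I)) • X) hb
        simp only [hT₂def, smul_smul, neg_mul, Complex.I_mul_I, neg_neg, one_smul] at h
        exact h
      have h2A : (2 : ℂ) • A = ((a : ℂ) + Complex.I * b) • 1 := by
        have e1 : (2 : ℂ) • A = T₁ - (star A - A) := by
          rw [hT₁def, two_smul]; abel
        rw [e1, ha, hsub, ← sub_smul]
        ring_nf
      refine hAns (((a : ℂ) + Complex.I * b) / 2) ?_
      have := congrArg (fun X : H →L[ℂ] H => ((2 : ℂ)⁻¹) • X) h2A
      simp only [smul_smul] at this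
      rw [show (2 : ℂ)⁻¹ * 2 = 1 by norm_num, one_smul] at this
      rw [this]
      congr 1
      ring
    obtain ⟨T, hTsa, hTns, hTcomm⟩ := hkey
    obtain ⟨W, hWc, hWb, hWt, hWinv⟩ :=
      exists_invariant_of_selfAdjoint_nonscalar T hTsa hTns
    exact ⟨W, hWc, hWb, hWt, fun B hB w hw => hWinv B (hTcomm B hB) w hw⟩
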